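/- Let σ be a finitely supported permutation of the nonzero integers, and let n ≠ m be integers ≥ 3. If σ maps the set {−2} ∪ {k : k ≥ 2} to either {−2} ∪ {k : k ≥ 2} or {−(m−1), ..., −1, 1} ∪ {k : k ≥ m+1} (where the cofinite parts agree appropriately), and similarly for the complementary sets, then σ({2, 3, ..., n}) equals either {2, 3, ..., m} or {−(m−1), −(m−2), ..., −3, −1, 1}; in either case this forces n = m, a contradiction. -/
import Mathlib


/-- The cofinite modification of `A_n`: `{-2, 2, 3, …, n, n+1, …} = {-2} ∪ {k ≥ 2}`. -/
def setA' : Set ℤ := {-2} ∪ {k : ℤ | 2 ≤ k}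

/-- The cofinite modification of `B_n`: `{-(n-1), …, -1, 1, n+1, n+2, …}`. -/
def setB' (n : ℤ) : Set ℤ := {k : ℤ | -(n - 1) ≤ k ∧ k ≤ -1} ∪ {1} ∪ {k : ℤ | n + 1 ≤ k}

/-- The set-theoretic computation in the proof of Proposition 3.1: if a finitely supported
permutation `σ` of the nonzero integers maps `{-2} ∪ {k ≥ 2}` to either `{-2} ∪ {k ≥ 2}` or
`{-(m-1), …, -1, 1} ∪ {k ≥ m+1}`, and the set `{-(n-1), …, -1, 1} ∪ {k ≥ n+1}` to the
complementary one, then `σ({2, 3, …, n})` equals either `{2, 3, …, m}` or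
`{-(m-1), -(m-2), …, -3, -1, 1}`; comparing cardinalities (`n-1` versus `m-1`) this forces
`n = m` — a contradiction when `n ≠ m`. -/
theorem stmt_5 (n m : ℤ) (hn : 3 ≤ n) (hm : 3 ≤ m)
    (σ : Equiv.Perm ℤ) (hσ0 : σ 0 = 0) (hfin : {z : ℤ | σ z ≠ z}.Finite)
    (h : (σ '' setA' = setA' ∧ σ '' setB' n = setB' m) ∨
         (σ '' setA' = setB' m ∧ σ '' setB' n = setA')) :
    (σ '' {k : ℤ | 2 ≤ k ∧ k ≤ n} = {k : ℤ | 2 ≤ k ∧ k ≤ m} ∨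
     σ '' {k : ℤ | 2 ≤ k ∧ k ≤ n} =
       {k : ℤ | -(m - 1) ≤ k ∧ k ≤ -3} ∪ {-1, 1}) ∧ n = m := by
  have hinj : Function.Injective σ := σ.injective
  have hdiff : {k : ℤ | 2 ≤ k ∧ k ≤ n} = setA' \ setB' n := by
    ext x; simp [setA', setB']; omega
  have key : σ '' {k : ℤ | 2 ≤ k ∧ k ≤ n} = σ '' setA' \ σ '' setB' n := by
    rw [hdiff, Set.image_diff hinj]
  -- cardinality facts
  have eIcc : ∀ a b : ℤ, {k : ℤ | a ≤ k ∧ k ≤ b} = ↑(Finset.Icc a b) := by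
    intro a b; ext x; simp
  have c1 : ∀ a b : ℤ, ({k : ℤ | a ≤ k ∧ k ≤ b}).ncard = (b + 1 - a).toNat := by
    intro a b
    rw [eIcc, Set.ncard_coe_finset, Int.card_Icc]
  have c2 : ({k : ℤ | -(m - 1) ≤ k ∧ k ≤ -3} ∪ {-1, 1} : Set ℤ).ncard
      = (m - 3).toNat + 2 := by
    have e2 : ({k : ℤ | -(m - 1) ≤ k ∧ k ≤ -3} ∪ {-1, 1} : Set ℤ)
        = ↑(Finset.Icc (-(m - 1)) (-3) ∪ {-1, 1}) := by
      ext x; simp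
    have hdisj : Disjoint (Finset.Icc (-(m - 1)) (-3)) ({-1, 1} : Finset ℤ) := by
      rw [Finset.disjoint_left]
      intro a ha hb
      simp at ha hb
      omega
    rw [e2, Set.ncard_coe_finset, Finset.card_union_of_disjoint hdisj, Int.card_Icc]
    norm_num
    omega
  have hc : ∀ (S T : Set ℤ), σ '' S = T → S.ncard = T.ncard := by
    intro S T hST
    rw [← hST, Set.ncard_image_of_injective _ hinj]
  rcases h with ⟨h1, h2⟩ | ⟨h1, h2⟩
  · have himg : σ '' {k : ℤ | 2 ≤ k ∧ k ≤ n} = {k : ℤ | 2 ≤ k ∧ k ≤ m} := by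
      rw [key, h1, h2]
      ext x; simp [setA', setB']; omega
    refine ⟨Or.inl himg, ?_⟩
    have := hc _ _ himg
    rw [c1, c1] at this
    omega
  · have himg : σ '' {k : ℤ | 2 ≤ k ∧ k ≤ n}
        = {k : ℤ | -(m - 1) ≤ k ∧ k ≤ -3} ∪ {-1, 1} := by
      rw [key, h1, h2]
      ext x; simp [setA', setB']; omega
    refine ⟨Or.inr himg, ?_⟩
    have := hc _ _ himg
    rw [c1, c2] at this
    omega
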